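/- arXiv:1904.10850 — 10 statements merged into one kernel-verified Lean document; each statement's English description precedes it below -/
import Mathlib

section
/- For every natural number r, every finite set S of cells of the integer grid in which any two cells are at Manhattan distance at most 2r satisfies |S| <= 2r^2 + 2r + 1. -/
/-- Manhattan distance between two cells of the integer grid. -/
def mdist (p q : ℤ × ℤ) : ℕ := (p.1 - q.1).natAbs + (p.2 - q.2).natAbs

/-- The disc of radius `r` centered at `c`: all cells at Manhattan distance at most `r`. -/
noncomputable def disc (r : ℕ) (c : ℤ × ℤ) : Finset (ℤ × ℤ) :=
  (Finset.Icc (c.1 - r, c.2 - r) (c.1 + r, c.2 + r)).filter (fun p => mdist p c ≤ r)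

/-- The span of a finite set of cells: the maximum Manhattan distance between two of
its cells (`0` if the set has at most one cell). -/
def span (S : Finset (ℤ × ℤ)) : ℕ := (S ×ˢ S).sup fun pq => mdist pq.1 pq.2

/-- Every finite set of cells in which any two cells are at Manhattan distance at most
`2r` has at most `2r² + 2r + 1` cells. -/
theorem card_le_of_pairwise_dist_le_even (r : ℕ) (S : Finset (ℤ × ℤ))
    (h : ∀ p ∈ S, ∀ q ∈ S, mdist p q ≤ 2 * r) :
    S.card ≤ 2 * r ^ 2 + 2 * r + 1 := by
  rcases S.eq_empty_or_nonempty with rfl | hS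
  · simp
  set a := S.inf' hS (fun p => p.1 + p.2) with ha
  set b := S.inf' hS (fun p => p.1 - p.2) with hb
  obtain ⟨pa, hpa, hpaeq⟩ := S.exists_mem_eq_inf' hS (fun p => p.1 + p.2)
  obtain ⟨pb, hpb, hpbeq⟩ := S.exists_mem_eq_inf' hS (fun p => p.1 - p.2)
  have hpaeq' : a = pa.1 + pa.2 := hpaeq
  have hpbeq' : b = pb.1 - pb.2 := hpbeq
  have hu : ∀ p ∈ S, a ≤ p.1 + p.2 ∧ p.1 + p.2 ≤ a + 2 * r := by
    intro p hp
    have h1 : a ≤ p.1 + p.2 := Finset.inf'_le _ hp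
    have h2 := h p hp pa hpa
    unfold mdist at h2
    omega
  have hv : ∀ p ∈ S, b ≤ p.1 - p.2 ∧ p.1 - p.2 ≤ b + 2 * r := by
    intro p hp
    have h1 : b ≤ p.1 - p.2 := Finset.inf'_le _ hp
    have h2 := h p hp pb hpb
    unfold mdist at h2
    omega
  set c : ℤ := if 2 ∣ a + b then 0 else 1 with hc
  have hc01 : c = 0 ∨ c = 1 := by rw [hc]; split_ifs <;> simp
  have hcpar : 2 ∣ a + b - c := by
    rw [hc]; split_ifs with hd
    · simpa using hd
    · omega
  set K : ℤ := 2 * (r:ℤ) ^ 2 + 2 * r with hK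
  set f : ℤ × ℤ → ℤ := fun p =>
    ((p.1 + p.2 - a) * (2 * r + 1) + (p.1 - p.2 - b) - c) / 2 with hf
  have hNrange : ∀ p ∈ S, 0 ≤ (p.1 + p.2 - a) * (2 * (r:ℤ) + 1) + (p.1 - p.2 - b) - c ∧
      (p.1 + p.2 - a) * (2 * (r:ℤ) + 1) + (p.1 - p.2 - b) - c ≤ 2 * K ∧
      2 ∣ ((p.1 + p.2 - a) * (2 * (r:ℤ) + 1) + (p.1 - p.2 - b) - c) := by
    intro p hp
    obtain ⟨h1, h2⟩ := hu p hp
    obtain ⟨h3, h4⟩ := hv p hp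
    have hA2 : p.1 + p.2 - a ≤ 2 * r := by omega
    have hmul : (p.1 + p.2 - a) * (2 * (r:ℤ) + 1) ≤ 2 * r * (2 * r + 1) := by
      apply mul_le_mul_of_nonneg_right hA2; positivity
    have hexp : (p.1 + p.2 - a) * (2 * (r:ℤ) + 1)
        = (p.1 + p.2 - a) + 2 * ((p.1 + p.2 - a) * r) := by ring
    have hmulnn : (0:ℤ) ≤ (p.1 + p.2 - a) * r := by
      apply mul_nonneg (by omega) (by positivity)
    have hKexp : 2 * K = 2 * (r:ℤ) * (2 * r + 1) + 2 * r := by rw [hK]; ring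
    refine ⟨by omega, by omega, ?_⟩
    omega
  have hinj : Set.InjOn f S := by
    intro p hp q hq hfeq
    obtain ⟨hp0, hp1, hp2⟩ := hNrange p hp
    obtain ⟨hq0, hq1, hq2⟩ := hNrange q hq
    have hN : (p.1 + p.2 - a) * (2 * (r:ℤ) + 1) + (p.1 - p.2 - b)
        = (q.1 + q.2 - a) * (2 * (r:ℤ) + 1) + (q.1 - q.2 - b) := by
      simp only [hf] at hfeq
      omega
    obtain ⟨hp3, hp4⟩ := hv p hp
    obtain ⟨hq3, hq4⟩ := hv q hq
    set D : ℤ := (p.1 + p.2) - (q.1 + q.2) with hD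
    have hDe : D * (2 * (r:ℤ) + 1) = (q.1 - q.2) - (p.1 - p.2) := by
      rw [hD]; linear_combination hN
    have hDzero : D = 0 := by
      rcases lt_trichotomy D 0 with hlt | he | hgt
      · exfalso
        have h1 : D ≤ -1 := by omega
        have : D * (2 * (r:ℤ) + 1) ≤ -1 * (2 * r + 1) := by
          apply mul_le_mul_of_nonneg_right h1; positivity
        omega
      · exact he
      · exfalso
        have h1 : 1 ≤ D := by omega
        have : 1 * (2 * (r:ℤ) + 1) ≤ D * (2 * r + 1) := by
          apply mul_le_mul_of_nonneg_right h1; positivity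
        omega
    have hD2 : (p.1 + p.2 - a) * (2 * (r:ℤ) + 1) = (q.1 + q.2 - a) * (2 * (r:ℤ) + 1) := by
      have : p.1 + p.2 = q.1 + q.2 := by omega
      rw [this]
    have : p.1 = q.1 ∧ p.2 = q.2 := by omega
    exact Prod.ext this.1 this.2
  have hmaps : ∀ p ∈ S, f p ∈ Finset.Icc (0:ℤ) K := by
    intro p hp
    obtain ⟨h0, h1, h2⟩ := hNrange p hp
    simp only [Finset.mem_Icc, hf]
    omega
  have hcard := Finset.card_le_card_of_injOn f hmaps hinj
  have h5 : (Finset.Icc (0:ℤ) K).card = 2 * r ^ 2 + 2 * r + 1 := by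
    rw [Int.card_Icc, hK]
    have hsq : ((r:ℤ)) ^ 2 = ((r ^ 2 : ℕ) : ℤ) := by push_cast; ring
    omega
  omega
end

section
/- For every natural number r, every finite set S of cells of the integer grid in which any two cells are at Manhattan distance at most 2r+1 satisfies |S| <= 2r^2 + 4r + 2, i.e. |S| <= 2(r+1)^2. -/
/-- Every finite set of cells in which any two cells are at Manhattan distance at most
`2r + 1` has at most `2r² + 4r + 2 = 2(r+1)²` cells. -/
theorem card_le_of_pairwise_dist_le_odd (r : ℕ) (S : Finset (ℤ × ℤ))
    (h : ∀ p ∈ S, ∀ q ∈ S, mdist p q ≤ 2 * r + 1) :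
    S.card ≤ 2 * r ^ 2 + 4 * r + 2 ∧ S.card ≤ 2 * (r + 1) ^ 2 := by
  have key : S.card ≤ 2 * r ^ 2 + 4 * r + 2 := by
    rcases S.eq_empty_or_nonempty with rfl | hne
    · simp
    set a := S.inf' hne (fun p => p.1 + p.2) with ha
    set b := S.inf' hne (fun p => p.1 - p.2) with hb
    obtain ⟨pa, hpa, hpaeq⟩ := S.exists_mem_eq_inf' hne (fun p => p.1 + p.2)
    obtain ⟨pb, hpb, hpbeq⟩ := S.exists_mem_eq_inf' hne (fun p => p.1 - p.2)
    have hale : ∀ p ∈ S, a ≤ p.1 + p.2 := fun p hp => S.inf'_le _ hp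
    have hble : ∀ p ∈ S, b ≤ p.1 - p.2 := fun p hp => S.inf'_le _ hp
    have haub : ∀ p ∈ S, p.1 + p.2 ≤ a + (2 * r + 1) := by
      intro p hp
      have := h p hp pa hpa
      simp only [mdist] at this
      omega
    have hbub : ∀ p ∈ S, p.1 - p.2 ≤ b + (2 * r + 1) := by
      intro p hp
      have := h p hp pb hpb
      simp only [mdist] at this
      omega
    have hcard : S.card ≤ ((Finset.range (2 * r + 2)) ×ˢ (Finset.range (r + 1))).card := by
      apply Finset.card_le_card_of_injOn
        (fun p => ((p.1 + p.2 - a).toNat, (p.1 - p.2 - b).toNat / 2))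
      · intro p hp
        simp only [Finset.mem_coe, Finset.mem_product, Finset.mem_range]
        have h1 := hale p hp
        have h2 := haub p hp
        have h3 := hble p hp
        have h4 := hbub p hp
        constructor <;> omega
      · intro p hp q hq heq
        have h1 := hale p hp
        have h2 := hale q hq
        have h3 := hble p hp
        have h4 := hble q hq
        have heq1 : (p.1 + p.2 - a).toNat = (q.1 + q.2 - a).toNat :=
          congrArg Prod.fst heq
        have heq2 : (p.1 - p.2 - b).toNat / 2 = (q.1 - q.2 - b).toNat / 2 :=
          congrArg Prod.snd heq
        have hpar : ((p.1 - p.2 - b) - (q.1 - q.2 - b)) % 2 = 0 := by omega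
        have : p.1 = q.1 ∧ p.2 = q.2 := by omega
        exact Prod.ext this.1 this.2
    have : ((Finset.range (2 * r + 2)) ×ˢ (Finset.range (r + 1))).card
        = 2 * r ^ 2 + 4 * r + 2 := by
      rw [Finset.card_product, Finset.card_range, Finset.card_range]; ring
    omega
  refine ⟨key, ?_⟩
  have : 2 * (r + 1) ^ 2 = 2 * r ^ 2 + 4 * r + 2 := by ring
  omega
end

section
/- For every natural number r, the union of the disc of radius r centered at (0,0) and the disc of radius r centered at (1,0) has exactly 2r^2 + 4r + 2 cells and has span exactly 2r+1. -/
lemma mem_disc {p : ℤ × ℤ} {r : ℕ} {c : ℤ × ℤ} :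
    p ∈ disc r c ↔ (p.1 - c.1).natAbs + (p.2 - c.2).natAbs ≤ r := by
  obtain ⟨x, y⟩ := p
  obtain ⟨a, b⟩ := c
  rw [disc, Finset.mem_filter, Finset.mem_Icc]
  simp [mdist, Prod.le_def]
  omega

noncomputable def rowS (r : ℕ) : Finset (ℤ × ℤ) :=
  (Finset.Icc (-(r:ℤ)) r).biUnion
    (fun y => (Finset.Icc (|y| - r) (1 + r - |y|)).image (fun x => (x, y)))

lemma mem_rowS {p : ℤ × ℤ} {r : ℕ} :
    p ∈ rowS r ↔ -(r:ℤ) ≤ p.2 ∧ p.2 ≤ r ∧ |p.2| - r ≤ p.1 ∧ p.1 ≤ 1 + r - |p.2| := by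
  obtain ⟨x, y⟩ := p
  simp only [rowS, Finset.mem_biUnion, Finset.mem_image, Finset.mem_Icc, Prod.mk.injEq]
  constructor
  · rintro ⟨y', ⟨h1, h2⟩, x', ⟨h3, h4⟩, rfl, rfl⟩
    exact ⟨h1, h2, h3, h4⟩
  · rintro ⟨h1, h2, h3, h4⟩
    exact ⟨y, ⟨h1, h2⟩, x, ⟨h3, h4⟩, rfl, rfl⟩

lemma sum_rows (r : ℕ) :
    ∑ y ∈ Finset.Icc (-(r:ℤ)) r, (2 * (r:ℤ) + 2 - 2 * |y|).toNat = 2 * r ^ 2 + 4 * r + 2 := by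
  induction r with
  | zero => simp
  | succ n ih =>
    have hset : Finset.Icc (-(((n:ℕ)+1:ℕ):ℤ)) (((n:ℕ)+1:ℕ):ℤ)
        = insert (-((n:ℤ)+1)) (insert ((n:ℤ)+1) (Finset.Icc (-(n:ℤ)) n)) := by
      ext z
      simp only [Finset.mem_Icc, Finset.mem_insert]
      push_cast
      omega
    rw [hset, Finset.sum_insert (by simp only [Finset.mem_insert, Finset.mem_Icc]; omega),
      Finset.sum_insert (by simp only [Finset.mem_Icc]; omega)]
    have hstep : ∑ y ∈ Finset.Icc (-(n:ℤ)) n, (2 * (((n:ℕ)+1:ℕ):ℤ) + 2 - 2 * |y|).toNat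
        = ∑ y ∈ Finset.Icc (-(n:ℤ)) n, ((2 * (n:ℤ) + 2 - 2 * |y|).toNat + 2) := by
      apply Finset.sum_congr rfl
      intro y hy
      simp only [Finset.mem_Icc] at hy
      have : |y| ≤ (n:ℤ) := abs_le.mpr ⟨hy.1, hy.2⟩
      push_cast
      omega
    rw [hstep, Finset.sum_add_distrib, ih, Finset.sum_const, Int.card_Icc]
    have hcard : ((n:ℤ) + 1 - -(n:ℤ)).toNat = 2 * n + 1 := by omega
    rw [hcard]
    have h1 : (2 * (((n:ℕ)+1:ℕ):ℤ) + 2 - 2 * |-(((n:ℤ))+1)|).toNat = 2 := by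
      push_cast; rw [abs_neg]; rw [abs_of_nonneg (by omega)]; omega
    have h2 : (2 * (((n:ℕ)+1:ℕ):ℤ) + 2 - 2 * |((n:ℤ))+1|).toNat = 2 := by
      push_cast; rw [abs_of_nonneg (by omega)]; omega
    rw [h1, h2]
    ring

lemma card_rowS (r : ℕ) : (rowS r).card = 2 * r ^ 2 + 4 * r + 2 := by
  rw [rowS, Finset.card_biUnion]
  · rw [← sum_rows r]
    apply Finset.sum_congr rfl
    intro y hy
    rw [Finset.card_image_of_injective _ (fun a b h => (Prod.mk.injEq _ _ _ _).mp h |>.1),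
      Int.card_Icc]
    congr 1
    omega
  · intro y1 _ y2 _ hne
    simp only [Finset.disjoint_left, Finset.mem_image]
    rintro p ⟨x1, _, rfl⟩ ⟨x2, _, h⟩
    exact hne ((Prod.mk.injEq _ _ _ _).mp h |>.2.symm)

lemma union_eq_rowS (r : ℕ) : disc r (0, 0) ∪ disc r (1, 0) = rowS r := by
  ext p
  obtain ⟨x, y⟩ := p
  simp only [Finset.mem_union, mem_disc, mem_rowS, sub_zero, Int.abs_eq_natAbs]
  omega

/-- The union of the discs of radius `r` centered at `(0,0)` and at `(1,0)` has exactly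
`2r² + 4r + 2` cells and span exactly `2r + 1`. -/
theorem disc_union_card_span (r : ℕ) :
    (disc r (0, 0) ∪ disc r (1, 0)).card = 2 * r ^ 2 + 4 * r + 2 ∧
    (∀ p ∈ disc r (0, 0) ∪ disc r (1, 0), ∀ q ∈ disc r (0, 0) ∪ disc r (1, 0),
      mdist p q ≤ 2 * r + 1) ∧
    (∃ p ∈ disc r (0, 0) ∪ disc r (1, 0), ∃ q ∈ disc r (0, 0) ∪ disc r (1, 0),
      mdist p q = 2 * r + 1) := by
  refine ⟨by rw [union_eq_rowS]; exact card_rowS r, ?_, ?_⟩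
  · intro p hp q hq
    simp only [Finset.mem_union, mem_disc, sub_zero] at hp hq
    obtain ⟨x1, y1⟩ := p
    obtain ⟨x2, y2⟩ := q
    simp only [mdist] at *
    omega
  · refine ⟨(-(r:ℤ), 0), ?_, ((r:ℤ) + 1, 0), ?_, ?_⟩
    · apply Finset.mem_union_left
      rw [mem_disc]
      simp
    · apply Finset.mem_union_right
      rw [mem_disc]
      simp
    · simp [mdist]
      omega
end

section
/- For every natural number s, the maximum cardinality of a finite set of cells of the integer grid in which any two cells are at Manhattan distance at most s equals the ceiling of (s+1)^2 / 2; that is, every such set has at most ceil((s+1)^2/2) cells, and some set of exactly ceil((s+1)^2/2) cells has all pairwise Manhattan distances at most s. -/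
lemma key' (k U V U' V' : ℕ) (hV : V < k) (hV' : V' < k) (hle : U ≤ U')
    (hpar : (U + V) % 2 = (U' + V') % 2) (h : (U * k + V) / 2 = (U' * k + V') / 2) :
    U = U' ∧ V = V' := by
  rcases Nat.eq_or_lt_of_le hle with rfl | hlt
  · refine ⟨rfl, ?_⟩; omega
  · exfalso
    have h1 : U * k + k ≤ U' * k := by
      calc U * k + k = (U + 1) * k := by ring
      _ ≤ U' * k := Nat.mul_le_mul_right k hlt
    have h2 : U' * k = U * k + k ∧ V' = 0 ∧ V + 1 = k := by omega
    have hk : k ≠ 0 := by omega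
    have h3 : U' = U + 1 := by
      have : U' * k = (U + 1) * k := by rw [h2.1]; ring
      exact Nat.eq_of_mul_eq_mul_right (by omega) this
    subst h3
    have hkE : k % 2 = 0 := by omega
    have h4 : U * k + k = 2 * ((U + 1) * (k / 2)) := by
      have hk2 : k = 2 * (k / 2) := by omega
      calc U * k + k = (U + 1) * k := by ring
      _ = (U + 1) * (2 * (k / 2)) := by rw [← hk2]
      _ = 2 * ((U + 1) * (k / 2)) := by ring
    omega

lemma key (k U V U' V' : ℕ) (hV : V < k) (hV' : V' < k)
    (hpar : (U + V) % 2 = (U' + V') % 2) (h : (U * k + V) / 2 = (U' * k + V') / 2) :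
    U = U' ∧ V = V' := by
  rcases le_total U U' with hle | hle
  · exact key' k U V U' V' hV hV' hle hpar h
  · have := key' k U' V' U V hV' hV hle hpar.symm h.symm
    exact ⟨this.1.symm, this.2.symm⟩

lemma upper (s : ℕ) (S : Finset (ℤ × ℤ)) (hS : ∀ p ∈ S, ∀ q ∈ S, mdist p q ≤ s) :
    S.card ≤ ((s + 1) ^ 2 + 1) / 2 := by
  rcases S.eq_empty_or_nonempty with rfl | hne
  · simp
  obtain ⟨p₀, hp₀, hmin₀⟩ := S.exists_min_image (fun p => p.1 + p.2) hne
  obtain ⟨p₁, hp₁, hmin₁⟩ := S.exists_min_image (fun p => p.1 - p.2) hne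
  set a : ℤ := p₀.1 + p₀.2 with ha
  set b : ℤ := p₁.1 - p₁.2 with hb
  set φ : ℤ × ℤ → ℕ := fun p => ((p.1 + p.2 - a).toNat * (s + 1) + (p.1 - p.2 - b).toNat) / 2
    with hφ
  have hUb : ∀ p ∈ S, (p.1 + p.2 - a).toNat ≤ s ∧ (p.1 - p.2 - b).toNat ≤ s := by
    intro p hp
    have h0 := hS p hp p₀ hp₀
    have h1 := hS p hp p₁ hp₁
    have h2 := hmin₀ p hp
    have h3 := hmin₁ p hp
    simp only [mdist] at h0 h1
    constructor <;> omega
  have hmaps : ∀ p ∈ S, φ p ∈ Finset.range (((s + 1) ^ 2 + 1) / 2) := by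
    intro p hp
    obtain ⟨hU, hV⟩ := hUb p hp
    rw [Finset.mem_range]
    show ((p.1 + p.2 - a).toNat * (s + 1) + (p.1 - p.2 - b).toNat) / 2 < ((s + 1) ^ 2 + 1) / 2
    have h4 : (p.1 + p.2 - a).toNat * (s + 1) ≤ s * (s + 1) := Nat.mul_le_mul_right _ hU
    have h5 : (s + 1) ^ 2 = s * (s + 1) + s + 1 := by ring
    omega
  have hinj : Set.InjOn φ S := by
    intro p hp q hq hpq
    obtain ⟨hU, hV⟩ := hUb p hp
    obtain ⟨hU', hV'⟩ := hUb q hq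
    have hnn : a ≤ p.1 + p.2 ∧ b ≤ p.1 - p.2 ∧ a ≤ q.1 + q.2 ∧ b ≤ q.1 - q.2 :=
      ⟨hmin₀ p hp, hmin₁ p hp, hmin₀ q hq, hmin₁ q hq⟩
    have hpar : ((p.1 + p.2 - a).toNat + (p.1 - p.2 - b).toNat) % 2 =
        ((q.1 + q.2 - a).toNat + (q.1 - q.2 - b).toNat) % 2 := by omega
    have := key (s + 1) _ _ _ _ (by omega) (by omega) hpar hpq
    have hp1 : p.1 = q.1 ∧ p.2 = q.2 := by omega
    exact Prod.ext hp1.1 hp1.2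
  calc S.card ≤ (Finset.range (((s + 1) ^ 2 + 1) / 2)).card :=
        Finset.card_le_card_of_injOn φ hmaps hinj
    _ = ((s + 1) ^ 2 + 1) / 2 := Finset.card_range _



lemma cntP (n t : ℕ) (ht : t < 2) :
    ((Finset.range n).filter (fun v => v % 2 = t)).card = (n + 1 - t) / 2 := by
  induction n with
  | zero => simp; omega
  | succ n ih =>
    rw [Finset.range_add_one, Finset.filter_insert]
    split
    · rw [Finset.card_insert_of_notMem (by simp)]
      omega
    · omega

lemma fibercnt (n U : ℕ) :
    ((Finset.range n).filter (fun v => (U + v) % 2 = 0)).card = (n + 1 - U % 2) / 2 := by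
  have h : ((Finset.range n).filter (fun v => (U + v) % 2 = 0)) =
      ((Finset.range n).filter (fun v => v % 2 = U % 2)) := by
    apply Finset.filter_congr
    intro x _
    constructor <;> (intro h; omega)
  rw [h, cntP n (U % 2) (by omega)]

def Fs (s : ℕ) : Finset (ℕ × ℕ) :=
  (Finset.range (s + 1) ×ˢ Finset.range (s + 1)).filter (fun p => (p.1 + p.2) % 2 = 0)

lemma mem_Fs (s : ℕ) (p : ℕ × ℕ) :
    p ∈ Fs s ↔ p.1 < s + 1 ∧ p.2 < s + 1 ∧ (p.1 + p.2) % 2 = 0 := by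
  simp only [Fs, Finset.mem_filter, Finset.mem_product, Finset.mem_range]
  tauto

lemma card_Fs (s : ℕ) : (Fs s).card = ((s + 1) ^ 2 + 1) / 2 := by
  have hfib := Finset.card_eq_sum_card_fiberwise
    (f := Prod.fst) (s := Fs s) (t := Finset.range (s + 1))
    (fun p hp => by
      simp only [Finset.mem_coe, mem_Fs] at hp ⊢
      exact Finset.mem_range.mpr hp.1)
  rw [hfib]
  have hfiber : ∀ U ∈ Finset.range (s + 1), ((Fs s).filter (fun p => p.1 = U)).card
      = (s + 2 - U % 2) / 2 := by
    intro U hU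
    rw [Finset.mem_range] at hU
    have himg : (Fs s).filter (fun p => p.1 = U) =
        ((Finset.range (s + 1)).filter (fun v => (U + v) % 2 = 0)).image (fun v => (U, v)) := by
      ext ⟨x, y⟩
      simp only [Finset.mem_filter, mem_Fs, Finset.mem_image, Finset.mem_range]
      constructor
      · rintro ⟨⟨hx, hy, hpar⟩, rfl⟩
        exact ⟨y, ⟨hy, hpar⟩, rfl⟩
      · rintro ⟨v, ⟨hv, hpar⟩, h⟩
        injection h with h1 h2
        subst h1; subst h2
        exact ⟨⟨hU, hv, hpar⟩, rfl⟩
    rw [himg, Finset.card_image_of_injective _ (fun a b h => by simpa using h), fibercnt]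
  rw [Finset.sum_congr rfl hfiber]
  rw [← Finset.sum_filter_add_sum_filter_not (Finset.range (s + 1)) (fun U => U % 2 = 0)]
  have h1 : ∑ U ∈ (Finset.range (s + 1)).filter (fun U => U % 2 = 0), (s + 2 - U % 2) / 2
      = ((s + 2) / 2) * ((s + 2) / 2) := by
    rw [Finset.sum_congr rfl (g := fun _ => (s + 2) / 2)
      (fun x hx => by
        simp only [Finset.mem_filter] at hx
        show (s + 2 - x % 2) / 2 = (s + 2) / 2
        omega)]
    rw [Finset.sum_const, cntP (s + 1) 0 (by omega), smul_eq_mul]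
    congr 1
  have h2 : ∑ U ∈ (Finset.range (s + 1)).filter (fun U => ¬ U % 2 = 0), (s + 2 - U % 2) / 2
      = ((s + 1) / 2) * ((s + 1) / 2) := by
    have he : (Finset.range (s + 1)).filter (fun U => ¬ U % 2 = 0)
        = (Finset.range (s + 1)).filter (fun U => U % 2 = 1) := by
      apply Finset.filter_congr; intro x _; constructor <;> (intro h; omega)
    rw [Finset.sum_congr he (g := fun _ => (s + 1) / 2)
      (fun x hx => by
        simp only [Finset.mem_filter] at hx
        show (s + 2 - x % 2) / 2 = (s + 1) / 2
        omega)]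
    rw [Finset.sum_const, cntP (s + 1) 1 (by omega), smul_eq_mul]
    congr 1
  rw [h1, h2]
  rcases Nat.even_or_odd (s + 1) with ⟨k, hk⟩ | ⟨k, hk⟩
  · have hsq : (s + 1) ^ 2 = 4 * (k * k) := by rw [hk]; ring
    rw [show (s + 2) / 2 = k from by omega, show (s + 1) / 2 = k from by omega]
    omega
  · have hsq : (s + 1) ^ 2 = 4 * (k * k) + 4 * k + 1 := by rw [hk]; ring
    rw [show (s + 2) / 2 = k + 1 from by omega, show (s + 1) / 2 = k from by omega,
      show (k + 1) * (k + 1) = k * k + 2 * k + 1 from by ring]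
    omega

lemma lower (s : ℕ) : ∃ S : Finset (ℤ × ℤ), (∀ p ∈ S, ∀ q ∈ S, mdist p q ≤ s) ∧
    S.card = ((s + 1) ^ 2 + 1) / 2 := by
  refine ⟨(Fs s).image (fun p => (((p.1 : ℤ) + p.2) / 2, ((p.1 : ℤ) - p.2) / 2)), ?_, ?_⟩
  · intro p hp q hq
    simp only [Finset.mem_image] at hp hq
    obtain ⟨u, hu, rfl⟩ := hp
    obtain ⟨w, hw, rfl⟩ := hq
    rw [mem_Fs] at hu hw
    simp only [mdist]
    obtain ⟨hu1, hu2, hu3⟩ := hu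
    obtain ⟨hw1, hw2, hw3⟩ := hw
    omega
  · rw [Finset.card_image_of_injOn, card_Fs]
    intro p hp q hq h
    rw [Finset.mem_coe, mem_Fs] at hp hq
    injection h with h1 h2
    have hc : p.1 = q.1 ∧ p.2 = q.2 := by
      obtain ⟨_, _, hp3⟩ := hp
      obtain ⟨_, _, hq3⟩ := hq
      omega
    exact Prod.ext hc.1 hc.2

/-- The maximum cardinality of a finite set of cells with all pairwise Manhattan
distances at most `s` equals `⌈(s+1)²/2⌉ = ((s+1)² + 1) / 2`. -/
theorem max_card_of_pairwise_dist_le (s : ℕ) :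
    (∀ S : Finset (ℤ × ℤ), (∀ p ∈ S, ∀ q ∈ S, mdist p q ≤ s) →
      S.card ≤ ((s + 1) ^ 2 + 1) / 2) ∧
    (∃ S : Finset (ℤ × ℤ), (∀ p ∈ S, ∀ q ∈ S, mdist p q ≤ s) ∧
      S.card = ((s + 1) ^ 2 + 1) / 2) := by
  exact ⟨upper s, lower s⟩
end

section
/- Every nonempty finite set S of cells of the integer grid whose span equals s satisfies 2|S| <= (s+1)^2 + 1. -/
private lemma aux_false (s : ℕ) (n up uq vp vq a b : ℤ) (hn : n = (s:ℤ)+1)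
    (hup1 : 0 ≤ up - a) (hup2 : up - a ≤ (s:ℤ))
    (huq1 : 0 ≤ uq - a) (huq2 : uq - a ≤ (s:ℤ))
    (hvp1 : 0 ≤ vp - b) (hvp2 : vp - b ≤ (s:ℤ))
    (hvq1 : 0 ≤ vq - b) (hvq2 : vq - b ≤ (s:ℤ))
    (hep : (up - vp) % 2 = 0) (heq : (uq - vq) % 2 = 0)
    (hlt : up < uq)
    (h : ((up-a)*n + (vp-b))/2 = ((uq-a)*n + (vq-b))/2) : False := by
  have hn0 : 0 < n := by omega
  obtain ⟨P, hP⟩ : ∃ P, (up-a)*n = P := ⟨_, rfl⟩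
  obtain ⟨Q, hQ⟩ : ∃ Q, (uq-a)*n = Q := ⟨_, rfl⟩
  have hP0 : 0 ≤ P := hP ▸ mul_nonneg hup1 hn0.le
  have hQ0 : 0 ≤ Q := hQ ▸ mul_nonneg huq1 hn0.le
  have key : P + n ≤ Q := by
    calc P + n = (up - a + 1) * n := by rw [← hP]; ring
    _ ≤ (uq - a) * n := mul_le_mul_of_nonneg_right (by omega) hn0.le
    _ = Q := hQ
  rw [hP, hQ] at h
  have hfacts : Q - P = n ∧ vq - b = 0 ∧ vp - b = (s:ℤ) ∧ Q % 2 = 1 := by omega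
  have hnodd : n % 2 = 1 := by
    rcases Int.even_or_odd n with he | ho
    · exfalso
      have hEQ : Even Q := hQ ▸ he.mul_left _
      rw [Int.even_iff] at hEQ
      omega
    · rwa [Int.odd_iff] at ho
  have hu1 : uq - up = 1 := by
    have h5 : (uq - a) * n - (up - a) * n = n := by rw [hP, hQ]; exact hfacts.1
    have h4 : (uq - up) * n = 1 * n := by linear_combination h5
    exact mul_right_cancel₀ (by omega) h4
  omega

/-- Every nonempty finite set `S` of cells whose span equals `s` satisfies
`2|S| ≤ (s+1)² + 1`. -/
theorem two_card_le_of_span (s : ℕ) (S : Finset (ℤ × ℤ)) (hne : S.Nonempty)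
    (hs : span S = s) :
    2 * S.card ≤ (s + 1) ^ 2 + 1 := by
  classical
  have hpq : ∀ p ∈ S, ∀ q ∈ S, mdist p q ≤ s := by
    intro p hp q hq
    rw [← hs]
    unfold span
    exact Finset.le_sup (f := fun pq : (ℤ × ℤ) × (ℤ × ℤ) => mdist pq.1 pq.2)
      (b := (p, q)) (Finset.mem_product.mpr ⟨hp, hq⟩)
  obtain ⟨pa, hpa, hpamin⟩ := S.exists_min_image (fun p => p.1 + p.2) hne
  obtain ⟨pb, hpb, hpbmin⟩ := S.exists_min_image (fun p => p.1 - p.2) hne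
  set a := pa.1 + pa.2 with ha
  set b := pb.1 - pb.2 with hb
  set n : ℤ := (s:ℤ) + 1 with hn
  have hn0 : 0 < n := by omega
  have hub : ∀ p ∈ S, 0 ≤ p.1 + p.2 - a ∧ p.1 + p.2 - a ≤ (s:ℤ) := by
    intro p hp
    have h1 := hpamin p hp
    have h2 := hpq p hp pa hpa
    simp only [mdist] at h2
    omega
  have hvb : ∀ p ∈ S, 0 ≤ p.1 - p.2 - b ∧ p.1 - p.2 - b ≤ (s:ℤ) := by
    intro p hp
    have h1 := hpbmin p hp
    have h2 := hpq p hp pb hpb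
    simp only [mdist] at h2
    omega
  have hmaps : ∀ p ∈ S,
      ((p.1 + p.2 - a) * n + (p.1 - p.2 - b)) / 2 ∈
        Finset.Icc (0:ℤ) (((s:ℤ) * n + s) / 2) := by
    intro p hp
    have hu := hub p hp
    have hv := hvb p hp
    have hk1 : 0 ≤ (p.1 + p.2 - a) * n + (p.1 - p.2 - b) :=
      add_nonneg (mul_nonneg hu.1 hn0.le) hv.1
    have hk2 : (p.1 + p.2 - a) * n + (p.1 - p.2 - b) ≤ (s:ℤ) * n + s :=
      add_le_add (mul_le_mul_of_nonneg_right hu.2 hn0.le) hv.2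
    rw [Finset.mem_Icc]
    exact ⟨Int.ediv_nonneg hk1 (by norm_num), Int.ediv_le_ediv (by norm_num) hk2⟩
  have hinj : Set.InjOn (fun p : ℤ × ℤ => ((p.1 + p.2 - a) * n + (p.1 - p.2 - b)) / 2)
      ↑S := by
    intro p hp q hq hfe
    simp only at hfe
    have hu := hub p (by exact_mod_cast hp)
    have hv := hvb p (by exact_mod_cast hp)
    have hu' := hub q (by exact_mod_cast hq)
    have hv' := hvb q (by exact_mod_cast hq)
    have hep : ((p.1 + p.2) - (p.1 - p.2)) % 2 = 0 := by omega
    have heq' : ((q.1 + q.2) - (q.1 - q.2)) % 2 = 0 := by omega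
    rcases lt_trichotomy (p.1 + p.2) (q.1 + q.2) with hlt | heq2 | hgt
    · exact (aux_false s n (p.1+p.2) (q.1+q.2) (p.1-p.2) (q.1-q.2) a b hn
        hu.1 hu.2 hu'.1 hu'.2 hv.1 hv.2 hv'.1 hv'.2 hep heq' hlt hfe).elim
    · have hPQ : (p.1 + p.2 - a) * n = (q.1 + q.2 - a) * n := by rw [heq2]
      obtain ⟨P, hP⟩ : ∃ P, (p.1 + p.2 - a) * n = P := ⟨_, rfl⟩
      rw [hP] at hfe hPQ
      rw [← hPQ] at hfe
      have : p.1 = q.1 ∧ p.2 = q.2 := by omega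
      exact Prod.ext this.1 this.2
    · exact (aux_false s n (q.1+q.2) (p.1+p.2) (q.1-q.2) (p.1-p.2) a b hn
        hu'.1 hu'.2 hu.1 hu.2 hv'.1 hv'.2 hv.1 hv.2 heq' hep hgt hfe.symm).elim
  have hcard : S.card ≤ (Finset.Icc (0:ℤ) (((s:ℤ) * n + s) / 2)).card :=
    Finset.card_le_card_of_injOn _ hmaps hinj
  rw [Int.card_Icc] at hcard
  obtain ⟨m, hm⟩ : ∃ m : ℕ, (s + 1) ^ 2 = m := ⟨_, rfl⟩
  have hm1 : 0 < m := by rw [← hm]; positivity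
  have hN : (s:ℤ) * n + (s:ℤ) = (m:ℤ) - 1 := by rw [← hm]; push_cast [hn]; ring
  rw [hN] at hcard
  rw [hm]
  omega
end

section
/- For every natural number r, the disc of radius r centered at any cell is a nest: every finite set of cells of the integer grid of cardinality 2r^2 + 2r + 1 has span at least 2r, and the disc of radius r has cardinality 2r^2 + 2r + 1 and span exactly 2r. -/
lemma mem_disc_s7 {r : ℕ} {c p : ℤ × ℤ} : p ∈ disc r c ↔ mdist p c ≤ r := by
  unfold disc; rw [Finset.mem_filter]
  simp only [Finset.mem_Icc, Prod.mk_le_mk, Prod.le_def, mdist]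
  constructor
  · exact fun h => h.2
  · intro h
    refine ⟨⟨⟨?_, ?_⟩, ?_, ?_⟩, h⟩ <;> omega

lemma mdist_le_span {S : Finset (ℤ × ℤ)} {p q : ℤ × ℤ} (hp : p ∈ S) (hq : q ∈ S) :
    mdist p q ≤ span S := by
  have hm : (p, q) ∈ S ×ˢ S := Finset.mem_product.2 ⟨hp, hq⟩
  exact Finset.le_sup (f := fun pq : (ℤ × ℤ) × (ℤ × ℤ) => mdist pq.1 pq.2) hm

lemma square_parity_card (r : ℕ) (ε : ℤ) :
    ((Finset.Icc (0:ℤ) (2*r-1) ×ˢ Finset.Icc (0:ℤ) (2*r-1)).filter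
      (fun q => (q.1 + q.2) % 2 = ε % 2)).card = 2 * r ^ 2 := by
  have key : ((Finset.Icc (0:ℤ) (2*r-1) ×ˢ Finset.Icc (0:ℤ) (2*r-1)).filter
      (fun q => (q.1 + q.2) % 2 = ε % 2)).card
      = ((Finset.Icc (0:ℤ) (2*r-1)) ×ˢ (Finset.Icc (0:ℤ) (r-1))).card := by
    refine Finset.card_bij' (fun q _ => (q.1, q.2 / 2))
      (fun q _ => (q.1, 2 * q.2 + (ε - q.1) % 2)) ?_ ?_ ?_ ?_
    · intro q hq
      simp only [Finset.mem_filter, Finset.mem_product, Finset.mem_Icc] at hq ⊢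
      omega
    · intro q hq
      simp only [Finset.mem_filter, Finset.mem_product, Finset.mem_Icc] at hq ⊢
      omega
    · intro q hq
      simp only [Finset.mem_filter, Finset.mem_product, Finset.mem_Icc] at hq
      dsimp only
      rw [Prod.mk.injEq]
      exact ⟨rfl, by omega⟩
    · intro q hq
      simp only [Finset.mem_product, Finset.mem_Icc] at hq
      dsimp only
      rw [Prod.mk.injEq]
      exact ⟨rfl, by omega⟩
  rw [key, Finset.card_product, Int.card_Icc, Int.card_Icc,
    show ((2*(r:ℤ)-1) + 1 - 0).toNat = 2*r by omega,
    show (((r:ℤ)-1) + 1 - 0).toNat = r by omega]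
  ring

lemma sum_aux (r : ℕ) (a : ℤ) :
    ∑ x ∈ Finset.Icc (a - r) (a + r), (2 * (r - (x - a).natAbs) + 1) = 2 * r ^ 2 + 2 * r + 1 := by
  induction r with
  | zero => simp
  | succ n ih =>
    have hset : Finset.Icc (a - (n+1 : ℕ)) (a + (n+1 : ℕ)) =
        insert (a - (n+1 : ℕ)) (insert (a + (n+1 : ℕ)) (Finset.Icc (a - n) (a + n))) := by
      ext x
      simp only [Finset.mem_insert, Finset.mem_Icc]
      push_cast
      omega
    rw [hset, Finset.sum_insert, Finset.sum_insert]
    · have h1 : ∑ x ∈ Finset.Icc (a - (n:ℤ)) (a + n), (2 * ((n+1) - (x - a).natAbs) + 1)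
          = ∑ x ∈ Finset.Icc (a - (n:ℤ)) (a + n), ((2 * (n - (x - a).natAbs) + 1) + 2) := by
        apply Finset.sum_congr rfl
        intro x hx
        simp only [Finset.mem_Icc] at hx
        omega
      have h2 : (Finset.Icc (a - (n:ℤ)) (a + n)).card = 2 * n + 1 := by
        rw [Int.card_Icc]; omega
      have e1 : ((a + (n+1:ℕ) : ℤ) - a).natAbs = n + 1 := by push_cast; omega
      have e2 : ((a - (n+1:ℕ) : ℤ) - a).natAbs = n + 1 := by push_cast; omega
      rw [h1, Finset.sum_add_distrib, ih, Finset.sum_const, h2, e1, e2, Nat.sub_self]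
      ring
    · simp only [Finset.mem_Icc]
      push_cast
      omega
    · simp only [Finset.mem_insert, Finset.mem_Icc]
      push_cast
      omega

lemma disc_card (r : ℕ) (c : ℤ × ℤ) : (disc r c).card = 2 * r ^ 2 + 2 * r + 1 := by
  have hf : ∀ p ∈ disc r c, p.1 ∈ Finset.Icc (c.1 - r) (c.1 + r) := by
    intro p hp
    rw [mem_disc_s7] at hp
    simp only [Finset.mem_Icc, mdist] at hp ⊢
    omega
  rw [Finset.card_eq_sum_card_fiberwise hf]
  rw [← sum_aux r c.1]
  apply Finset.sum_congr rfl
  intro x hx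
  simp only [Finset.mem_Icc] at hx
  have hfib : (disc r c).filter (fun p => p.1 = x)
      = (Finset.Icc (c.2 - (r - (x - c.1).natAbs : ℕ)) (c.2 + (r - (x - c.1).natAbs : ℕ))).map
        ⟨fun y => (x, y), by intro y1 y2 h; simpa using h⟩ := by
    ext p
    simp only [Finset.mem_filter, mem_disc_s7, Finset.mem_map, Finset.mem_Icc,
      Function.Embedding.coeFn_mk, mdist, Prod.ext_iff]
    dsimp only [DFunLike.coe]
    constructor
    · rintro ⟨h1, h2⟩
      exact ⟨p.2, ⟨by omega, by omega⟩, by omega, by omega⟩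
    · rintro ⟨y, hy, h1, h2⟩
      constructor <;> omega
  rw [hfib, Finset.card_map, Int.card_Icc]
  omega

lemma span_disc (r : ℕ) (c : ℤ × ℤ) : span (disc r c) = 2 * r := by
  apply le_antisymm
  · apply Finset.sup_le
    intro pq hpq
    rw [Finset.mem_product] at hpq
    have h1 := mem_disc_s7.1 hpq.1
    have h2 := mem_disc_s7.1 hpq.2
    simp only [mdist] at h1 h2 ⊢
    omega
  · have h1 : ((c.1 + r, c.2) : ℤ × ℤ) ∈ disc r c := by
      rw [mem_disc_s7]; simp only [mdist]; omega
    have h2 : ((c.1 - r, c.2) : ℤ × ℤ) ∈ disc r c := by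
      rw [mem_disc_s7]; simp only [mdist]; omega
    have := mdist_le_span h1 h2
    simp only [mdist] at this
    omega

/-- The disc of radius `r` is a nest: every finite set of `2r² + 2r + 1` cells has span
at least `2r`, and the disc has exactly `2r² + 2r + 1` cells and span exactly `2r`. -/
theorem disc_is_nest (r : ℕ) (c : ℤ × ℤ) :
    (∀ S : Finset (ℤ × ℤ), S.card = 2 * r ^ 2 + 2 * r + 1 → 2 * r ≤ span S) ∧
    (disc r c).card = 2 * r ^ 2 + 2 * r + 1 ∧
    span (disc r c) = 2 * r := by
  refine ⟨?_, disc_card r c, span_disc r c⟩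
  intro S hS
  by_contra hcon
  push_neg at hcon
  have hr : 0 < r := by by_contra h; omega
  have hne : S.Nonempty := Finset.card_pos.1 (by omega)
  obtain ⟨qa, hqa, hqa'⟩ := S.exists_mem_eq_inf' hne (fun p => p.1 + p.2)
  obtain ⟨qb, hqb, hqb'⟩ := S.exists_mem_eq_inf' hne (fun p => p.1 - p.2)
  set a := S.inf' hne (fun p => p.1 + p.2) with ha
  set b := S.inf' hne (fun p => p.1 - p.2) with hb
  have key : ∀ p ∈ S, a ≤ p.1 + p.2 ∧ p.1 + p.2 ≤ a + (2*r - 1) ∧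
      b ≤ p.1 - p.2 ∧ p.1 - p.2 ≤ b + (2*r - 1) := by
    intro p hp
    have l1 : a ≤ p.1 + p.2 := Finset.inf'_le _ hp
    have l2 : b ≤ p.1 - p.2 := Finset.inf'_le _ hp
    have d1 : mdist p qa ≤ 2*r - 1 := by
      have := mdist_le_span hp hqa
      omega
    have d2 : mdist p qb ≤ 2*r - 1 := by
      have := mdist_le_span hp hqb
      omega
    simp only [mdist] at d1 d2
    refine ⟨l1, ?_, l2, ?_⟩ <;> omega
  have hmaps : ∀ p ∈ S, (p.1 + p.2 - a, p.1 - p.2 - b) ∈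
      ((Finset.Icc (0:ℤ) (2*r-1) ×ˢ Finset.Icc (0:ℤ) (2*r-1)).filter
        (fun q => (q.1 + q.2) % 2 = (-(a+b)) % 2)) := by
    intro p hp
    obtain ⟨k1, k2, k3, k4⟩ := key p hp
    simp only [Finset.mem_filter, Finset.mem_product, Finset.mem_Icc]
    refine ⟨⟨⟨?_, ?_⟩, ?_, ?_⟩, ?_⟩ <;> omega
  have hinj : Set.InjOn (fun p : ℤ × ℤ => (p.1 + p.2 - a, p.1 - p.2 - b)) S := by
    intro p hp q hq h
    simp only [Prod.ext_iff] at h ⊢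
    obtain ⟨h1, h2⟩ := h
    constructor <;> omega
  have hle := Finset.card_le_card_of_injOn _ hmaps hinj
  rw [square_parity_card] at hle
  omega
end

section
/- For every positive integer z, there exists a set of z cells of the integer grid whose span is strictly smaller than 2*sqrt(z); that is, the span of a nest of size z is smaller than 2*sqrt(z). -/
/-- For every positive `z` there is a set of `z` cells whose span is smaller than
`2√z`; hence the span of a nest of size `z` is smaller than `2√z`. -/
theorem exists_span_lt_two_sqrt (z : ℕ) (hz : 0 < z) :
    ∃ S : Finset (ℤ × ℤ), S.card = z ∧ (span S : ℝ) < 2 * Real.sqrt z := by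
  set s : ℕ := Nat.sqrt (z - 1) + 1 with hs
  have hsq : (s - 1) * (s - 1) < z := by
    have h := Nat.sqrt_le' (z - 1)
    rw [sq] at h
    simp only [hs, Nat.add_sub_cancel]
    omega
  have hzs : z ≤ s * s := by
    have h := Nat.lt_succ_sqrt' (z - 1)
    rw [sq, Nat.succ_eq_add_one] at h
    simp only [hs]
    omega
  -- the square [0, s-1] × [0, s-1]
  set T : Finset (ℤ × ℤ) := Finset.Icc ((0 : ℤ), (0 : ℤ)) ((s : ℤ) - 1, (s : ℤ) - 1) with hT
  have hTcard : T.card = s * s := by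
    rw [hT, Finset.Icc_prod_def, Finset.card_product]
    simp [Int.card_Icc]
  obtain ⟨S, hST, hScard⟩ := Finset.exists_subset_card_eq (hTcard ▸ hzs : z ≤ T.card)
  refine ⟨S, hScard, ?_⟩
  have hspan : span S ≤ 2 * (s - 1) := by
    apply Finset.sup_le
    rintro ⟨⟨p1, p2⟩, ⟨q1, q2⟩⟩ hpq
    rw [Finset.mem_product] at hpq
    have hp := hST hpq.1
    have hq := hST hpq.2
    simp only [hT, Finset.mem_Icc, Prod.le_def] at hp hq
    simp only [mdist]
    omega
  calc (span S : ℝ) ≤ 2 * ((s : ℝ) - 1) := by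
        have : ((2 * (s - 1) : ℕ) : ℝ) = 2 * ((s : ℝ) - 1) := by
          push_cast [Nat.cast_sub (by omega : 1 ≤ s)]; ring
        exact this ▸ Nat.cast_le.mpr hspan
    _ < 2 * Real.sqrt z := by
        have h1 : (0:ℝ) ≤ (s:ℝ) - 1 := by
          have : (1:ℕ) ≤ s := by omega
          have : (1:ℝ) ≤ s := by exact_mod_cast this
          linarith
        have : ((s:ℝ) - 1) < Real.sqrt z := by
          rw [show ((s:ℝ) - 1) = ((s - 1 : ℕ) : ℝ) by
            push_cast [Nat.cast_sub (by omega : 1 ≤ s)]; ring]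
          rw [Real.lt_sqrt (by positivity)]
          have : ((s-1)*(s-1) : ℕ) < z := hsq
          exact_mod_cast by rw [sq]; exact_mod_cast this
        linarith
end

section
/- Let s be a natural number and let C be a finite set of cells of the integer grid having maximum cardinality among all finite sets of cells whose span is at most s. Then every cell of C that is adjacent to at least one cell not in C has at most 2 of its 4 adjacent cells in C. -/
lemma mdist_comm (p q : ℤ × ℤ) : mdist p q = mdist q p := by
  simp only [mdist]; omega

lemma le_span {C : Finset (ℤ × ℤ)} {p q : ℤ × ℤ} (hp : p ∈ C) (hq : q ∈ C) :
    mdist p q ≤ span C := by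
  have h := Finset.le_sup (f := fun pq : (ℤ × ℤ) × (ℤ × ℤ) => mdist pq.1 pq.2)
    (Finset.mem_product.mpr ⟨hp, hq⟩ : (p, q) ∈ C ×ˢ C)
  simpa [span] using h

/-- In a maximum-cardinality finite set of cells of span at most `s`, every cell that is
adjacent to some cell outside the set has at most `2` of its `4` adjacent cells in the
set. -/
theorem max_card_border_cell (s : ℕ) (C : Finset (ℤ × ℤ))
    (hC : span C ≤ s)
    (hmax : ∀ S : Finset (ℤ × ℤ), span S ≤ s → S.card ≤ C.card) :
    ∀ c ∈ C, (∃ d : ℤ × ℤ, mdist c d = 1 ∧ d ∉ C) →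
      (C.filter (fun d => mdist c d = 1)).card ≤ 2 := by
  rintro c hc ⟨d, hd1, hd2⟩
  obtain ⟨x, y⟩ := c
  by_contra hcard
  push_neg at hcard
  -- the four neighbors of c
  have hmem : ∀ n : ℤ × ℤ, mdist (x, y) n = 1 ↔
      n ∈ ({(x+1, y), (x-1, y), (x, y+1), (x, y-1)} : Finset (ℤ × ℤ)) := by
    intro n
    obtain ⟨u, v⟩ := n
    simp only [mdist, Finset.mem_insert, Finset.mem_singleton, Prod.mk.injEq]
    omega
  set S : Finset (ℤ × ℤ) := {(x+1, y), (x-1, y), (x, y+1), (x, y-1)} with hS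
  have hdS : d ∈ S := (hmem d).mp hd1
  have h4 : S.card ≤ 4 := by
    refine (Finset.card_insert_le _ _).trans (Nat.succ_le_succ ?_)
    refine (Finset.card_insert_le _ _).trans (Nat.succ_le_succ ?_)
    refine (Finset.card_insert_le _ _).trans (Nat.succ_le_succ ?_)
    simp
  have hsub : C.filter (fun e => mdist (x, y) e = 1) ⊆ S.erase d := by
    intro n hn
    rw [Finset.mem_filter] at hn
    refine Finset.mem_erase.mpr ⟨?_, (hmem n).mp hn.2⟩
    rintro rfl; exact hd2 hn.1
  -- every neighbor of c other than d is in C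
  have hC3 : ∀ n ∈ S, n ≠ d → n ∈ C := by
    intro n hn hnd
    by_contra hnC
    have hsub2 : C.filter (fun e => mdist (x, y) e = 1) ⊆ (S.erase d).erase n := by
      intro m hm
      refine Finset.mem_erase.mpr ⟨?_, hsub hm⟩
      rintro rfl; exact hnC (Finset.mem_filter.mp hm).1
    have hle := Finset.card_le_card hsub2
    have h1 := Finset.card_erase_of_mem hdS
    have h2 := Finset.card_erase_of_mem (Finset.mem_erase.mpr ⟨hnd, hn⟩)
    omega
  -- key: d is within distance s of every element of C
  have key : ∀ e ∈ C, mdist d e ≤ s := by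
    intro e he
    by_contra hde
    push_neg at hde
    obtain ⟨a, b⟩ := e
    have hce : mdist (x, y) (a, b) ≤ s := (le_span hc he).trans hC
    have hin : ∀ n ∈ S, n ≠ d → mdist n (a, b) ≤ s := fun n hn hnd =>
      (le_span (hC3 n hn hnd) he).trans hC
    simp only [hS, Finset.mem_insert, Finset.mem_singleton] at hdS
    rcases hdS with rfl | rfl | rfl | rfl
    · have h1 := hin (x-1, y) (by simp [hS]) (by simp only [ne_eq, Prod.mk.injEq, not_and]; intro h; omega)
      have h2 := hin (x, y+1) (by simp [hS]) (by simp only [ne_eq, Prod.mk.injEq, not_and]; intro h; omega)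
      have h3 := hin (x, y-1) (by simp [hS]) (by simp only [ne_eq, Prod.mk.injEq, not_and]; intro h; omega)
      simp only [mdist] at h1 h2 h3 hce hde
      omega
    · have h1 := hin (x+1, y) (by simp [hS]) (by simp only [ne_eq, Prod.mk.injEq, not_and]; intro h; omega)
      have h2 := hin (x, y+1) (by simp [hS]) (by simp only [ne_eq, Prod.mk.injEq, not_and]; intro h; omega)
      have h3 := hin (x, y-1) (by simp [hS]) (by simp only [ne_eq, Prod.mk.injEq, not_and]; intro h; omega)
      simp only [mdist] at h1 h2 h3 hce hde
      omega
    · have h1 := hin (x+1, y) (by simp [hS]) (by simp only [ne_eq, Prod.mk.injEq, not_and]; intro h; omega)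
      have h2 := hin (x-1, y) (by simp [hS]) (by simp only [ne_eq, Prod.mk.injEq, not_and]; intro h; omega)
      have h3 := hin (x, y-1) (by simp [hS]) (by simp only [ne_eq, Prod.mk.injEq, not_and]; intro h; omega)
      simp only [mdist] at h1 h2 h3 hce hde
      omega
    · have h1 := hin (x+1, y) (by simp [hS]) (by simp only [ne_eq, Prod.mk.injEq, not_and]; intro h; omega)
      have h2 := hin (x-1, y) (by simp [hS]) (by simp only [ne_eq, Prod.mk.injEq, not_and]; intro h; omega)
      have h3 := hin (x, y+1) (by simp [hS]) (by simp only [ne_eq, Prod.mk.injEq, not_and]; intro h; omega)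
      simp only [mdist] at h1 h2 h3 hce hde
      omega
  -- C ∪ {d} still has span ≤ s, contradicting maximality
  have hspan : span (insert d C) ≤ s := by
    refine Finset.sup_le ?_
    intro pq hpq
    rw [Finset.mem_product] at hpq
    obtain ⟨hp, hq⟩ := hpq
    rcases Finset.mem_insert.mp hp with h1 | h1 <;>
      rcases Finset.mem_insert.mp hq with h2 | h2
    · rw [h1, h2]; simp [mdist]
    · rw [h1]; exact key _ h2
    · rw [h2, mdist_comm]; exact key _ h1
    · exact (le_span h1 h2).trans hC
  have hle := hmax (insert d C) hspan
  rw [Finset.card_insert_of_notMem hd2] at hle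
  omega
end

section
/- Let A and B be disjoint finite sets of cells of the integer grid such that every cell of A is at Manhattan distance at least D from every cell of B, where D is a natural number. Let N be a set of cells whose span is at most D', with D' <= D, and let f be a function mapping every cell of A union B to a cell of N. Then the sum over all x in A union B of the Manhattan distance between x and f(x) is at least min(|A|,|B|) * (D - D'). -/
lemma mdist_triangle (a c b : ℤ × ℤ) : mdist a b ≤ mdist a c + mdist c b := by
  unfold mdist
  have h1 : (a.1 - b.1).natAbs ≤ (a.1 - c.1).natAbs + (c.1 - b.1).natAbs := by
    have := Int.natAbs_add_le (a.1 - c.1) (c.1 - b.1)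
    simpa using this
  have h2 : (a.2 - b.2).natAbs ≤ (a.2 - c.2).natAbs + (c.2 - b.2).natAbs := by
    have := Int.natAbs_add_le (a.2 - c.2) (c.2 - b.2)
    simpa using this
  omega

/-- If the disjoint finite sets `A` and `B` are at Manhattan distance at least `D`
from each other and `f` maps `A ∪ B` into a set `N` of span at most `D' ≤ D`, then the
total distance travelled, `∑ x ∈ A ∪ B, mdist x (f x)`, is at least
`min(|A|,|B|) ⬝ (D - D')`. -/
theorem transport_lower_bound (A B N : Finset (ℤ × ℤ)) (hAB : Disjoint A B)
    (D D' : ℕ) (hD : D' ≤ D)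
    (hfar : ∀ a ∈ A, ∀ b ∈ B, D ≤ mdist a b)
    (hN : span N ≤ D')
    (f : ℤ × ℤ → ℤ × ℤ) (hf : ∀ x ∈ A ∪ B, f x ∈ N) :
    min A.card B.card * (D - D') ≤ ∑ x ∈ A ∪ B, mdist x (f x) := by
  rcases A.eq_empty_or_nonempty with rfl | hA
  · simp
  rcases B.eq_empty_or_nonempty with rfl | hB
  · simp
  obtain ⟨a0, ha0, ha0min⟩ := A.exists_min_image (fun x => mdist x (f x)) hA
  obtain ⟨b0, hb0, hb0min⟩ := B.exists_min_image (fun x => mdist x (f x)) hB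
  have hfa : f a0 ∈ N := hf a0 (Finset.mem_union_left _ ha0)
  have hfb : f b0 ∈ N := hf b0 (Finset.mem_union_right _ hb0)
  have hkey : D - D' ≤ mdist a0 (f a0) + mdist b0 (f b0) := by
    have h1 : D ≤ mdist a0 b0 := hfar a0 ha0 b0 hb0
    have h2 : mdist a0 b0 ≤ mdist a0 (f a0) + mdist (f a0) b0 := mdist_triangle _ _ _
    have h3 : mdist (f a0) b0 ≤ mdist (f a0) (f b0) + mdist (f b0) b0 := mdist_triangle _ _ _
    have h4 : mdist (f a0) (f b0) ≤ D' := le_trans (mdist_le_span hfa hfb) hN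
    have h5 : mdist (f b0) b0 = mdist b0 (f b0) := by unfold mdist; omega
    omega
  have hsumA : A.card * mdist a0 (f a0) ≤ ∑ x ∈ A, mdist x (f x) := by
    calc A.card * mdist a0 (f a0) = ∑ _x ∈ A, mdist a0 (f a0) := by
          rw [Finset.sum_const, smul_eq_mul]
      _ ≤ ∑ x ∈ A, mdist x (f x) := Finset.sum_le_sum (fun x hx => ha0min x hx)
  have hsumB : B.card * mdist b0 (f b0) ≤ ∑ x ∈ B, mdist x (f x) := by
    calc B.card * mdist b0 (f b0) = ∑ _x ∈ B, mdist b0 (f b0) := by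
          rw [Finset.sum_const, smul_eq_mul]
      _ ≤ ∑ x ∈ B, mdist x (f x) := Finset.sum_le_sum (fun x hx => hb0min x hx)
  rw [Finset.sum_union hAB]
  calc min A.card B.card * (D - D')
      ≤ min A.card B.card * (mdist a0 (f a0) + mdist b0 (f b0)) :=
        Nat.mul_le_mul_left _ hkey
    _ = min A.card B.card * mdist a0 (f a0) + min A.card B.card * mdist b0 (f b0) := by ring
    _ ≤ A.card * mdist a0 (f a0) + B.card * mdist b0 (f b0) :=
        Nat.add_le_add (Nat.mul_le_mul_right _ (min_le_left _ _))
          (Nat.mul_le_mul_right _ (min_le_right _ _))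
    _ ≤ _ := Nat.add_le_add hsumA hsumB
end

section
/- Let a, b, k be positive integers with 2k < b, and let R be the rectangle of cells {0,...,b-1} x {0,...,a-1}. Let N be a set of cells whose span is at most D, where D is a natural number with D <= b - 2k + 1, and let f be any function mapping every cell of R to a cell of N. Then the sum over all cells p of R of the Manhattan distance between p and f(p) is at least k * a * (b - 2k + 1 - D). -/
/-- Gathering the cells of an `a × b` rectangle into a set `N` of span at most
`D ≤ b - 2k + 1` requires total Manhattan travel at least `k ⬝ a ⬝ (b - 2k + 1 - D)`. -/
theorem rectangle_transport_lower_bound (a b k : ℕ)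
    (ha : 0 < a) (hb : 0 < b) (hk : 0 < k) (hkb : 2 * k < b)
    (N : Finset (ℤ × ℤ)) (D : ℕ) (hD : D ≤ b - 2 * k + 1) (hN : span N ≤ D)
    (f : ℤ × ℤ → ℤ × ℤ)
    (hf : ∀ p ∈ Finset.Icc ((0 : ℤ), (0 : ℤ)) ((b : ℤ) - 1, (a : ℤ) - 1), f p ∈ N) :
    k * a * (b - 2 * k + 1 - D) ≤
      ∑ p ∈ Finset.Icc ((0 : ℤ), (0 : ℤ)) ((b : ℤ) - 1, (a : ℤ) - 1), mdist p (f p) := by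
  have hspan : ∀ p ∈ N, ∀ q ∈ N, mdist p q ≤ D := by
    intro p hp q hq
    have h := Finset.le_sup (f := fun pq : (ℤ × ℤ) × (ℤ × ℤ) => mdist pq.1 pq.2)
      (show (p, q) ∈ N ×ˢ N from Finset.mem_product.2 ⟨hp, hq⟩)
    exact le_trans h hN
  -- rewrite the rectangle as a product and the sum as a double sum
  rw [Finset.Icc_prod_def, Finset.sum_product_right]
  -- per-row bound
  have hrow : ∀ y ∈ Finset.Icc (0 : ℤ) ((a : ℤ) - 1),
      k * (b - 2 * k + 1 - D) ≤
        ∑ x ∈ Finset.Icc (0 : ℤ) ((b : ℤ) - 1), mdist (x, y) (f (x, y)) := by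
    intro y hy
    have hy' := Finset.mem_Icc.1 hy
    set F : ℤ → ℕ := fun x => mdist (x, y) (f (x, y)) with hF
    have hsub : Finset.Icc (0 : ℤ) ((k : ℤ) - 1) ∪
        Finset.Icc ((b : ℤ) - k) ((b : ℤ) - 1) ⊆ Finset.Icc (0 : ℤ) ((b : ℤ) - 1) := by
      intro x hx
      simp only [Finset.mem_union, Finset.mem_Icc] at hx ⊢
      omega
    have hdisj : Disjoint (Finset.Icc (0 : ℤ) ((k : ℤ) - 1))
        (Finset.Icc ((b : ℤ) - k) ((b : ℤ) - 1)) := by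
      rw [Finset.disjoint_left]
      intro x hx hx'
      simp only [Finset.mem_Icc] at hx hx'
      omega
    calc (k : ℕ) * (b - 2 * k + 1 - D)
        = ∑ x ∈ Finset.Icc (0 : ℤ) ((k : ℤ) - 1), (b - 2 * k + 1 - D) := by
          rw [Finset.sum_const, smul_eq_mul]
          congr 1
          rw [Int.card_Icc]
          omega
      _ ≤ ∑ x ∈ Finset.Icc (0 : ℤ) ((k : ℤ) - 1), (F x + F ((b : ℤ) - 1 - x)) := by
          apply Finset.sum_le_sum
          intro x hx
          have hx' := Finset.mem_Icc.1 hx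
          have hm1 : (x, y) ∈ Finset.Icc ((0 : ℤ), (0 : ℤ)) ((b : ℤ) - 1, (a : ℤ) - 1) := by
            simp only [Finset.mem_Icc, Prod.le_def]
            constructor <;> constructor <;> omega
          have hm2 : ((b : ℤ) - 1 - x, y) ∈
              Finset.Icc ((0 : ℤ), (0 : ℤ)) ((b : ℤ) - 1, (a : ℤ) - 1) := by
            simp only [Finset.mem_Icc, Prod.le_def]
            constructor <;> constructor <;> omega
          have h1 := hspan _ (hf _ hm1) _ (hf _ hm2)
          simp only [hF, mdist] at h1 ⊢
          omega
      _ = ∑ x ∈ Finset.Icc (0 : ℤ) ((k : ℤ) - 1), F x +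
            ∑ x ∈ Finset.Icc ((b : ℤ) - k) ((b : ℤ) - 1), F x := by
          rw [Finset.sum_add_distrib]
          congr 1
          apply Finset.sum_nbij' (fun x => (b : ℤ) - 1 - x) (fun x => (b : ℤ) - 1 - x)
          · intro x hx; simp only [Finset.mem_Icc] at hx ⊢; omega
          · intro x hx; simp only [Finset.mem_Icc] at hx ⊢; omega
          · intro x _; ring
          · intro x _; ring
          · intro x _; rfl
      _ = ∑ x ∈ Finset.Icc (0 : ℤ) ((k : ℤ) - 1) ∪
            Finset.Icc ((b : ℤ) - k) ((b : ℤ) - 1), F x := (Finset.sum_union hdisj).symm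
      _ ≤ ∑ x ∈ Finset.Icc (0 : ℤ) ((b : ℤ) - 1), F x :=
          Finset.sum_le_sum_of_subset hsub
  calc k * a * (b - 2 * k + 1 - D)
      = ∑ _y ∈ Finset.Icc (0 : ℤ) ((a : ℤ) - 1), k * (b - 2 * k + 1 - D) := by
        rw [Finset.sum_const, smul_eq_mul, Int.card_Icc]
        have : ((a : ℤ) - 1 + 1 - 0).toNat = a := by omega
        rw [this]; ring
    _ ≤ _ := Finset.sum_le_sum hrow
end
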